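/- Let $\theta_i = i$ and let $X_i$ be independent exponentials with rate $i$. Let $\sigma_n \in S_n$ be the permutation with $X_{\sigma_n(1)} > \cdots > X_{\sigma_n(n)}$. Then $\lim_{n\to\infty} P(\sigma_n(1) = 1) = \int_0^1 \prod_{j=2}^\infty (1 - y^j)\, dy$. -/

import Mathlib

open MeasureTheory ProbabilityTheory Filter
open scoped ENNReal

section Aux

open Real Set

lemma aux_expMeasure_Iic (r : ℝ) (hr : 0 < r) (x : ℝ) :
    expMeasure r (Iic x) = ENNReal.ofReal (1 - Real.exp (-(r * x))) := by
  haveI : IsProbabilityMeasure (expMeasure r) := isProbabilityMeasure_expMeasure hr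
  rw [← ProbabilityTheory.ofReal_cdf (expMeasure r) x]
  have h1 : (cdf (expMeasure r)) x = if 0 ≤ x then 1 - Real.exp (-(r * x)) else 0 :=
    cdf_expMeasure_eq hr x
  rw [h1]
  split_ifs with h
  · rfl
  · rw [eq_comm, ENNReal.ofReal_zero, ENNReal.ofReal_eq_zero]
    have hx : 0 ≤ -(r * x) := by nlinarith
    have := Real.one_le_exp hx
    linarith

lemma aux_expMeasure_singleton (r x : ℝ) : expMeasure r {x} = 0 := by
  rw [expMeasure, gammaMeasure, withDensity_apply _ (measurableSet_singleton x)]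
  exact setLIntegral_measure_zero _ _ (measure_singleton x)

instance aux_noAtoms (r : ℝ) : NullSingletonClass (expMeasure r) :=
  ⟨fun x => aux_expMeasure_singleton r x⟩

lemma aux_expMeasure_Iio (r : ℝ) (hr : 0 < r) (x : ℝ) :
    expMeasure r (Iio x) = ENNReal.ofReal (1 - Real.exp (-(r * x))) := by
  rw [measure_congr (Iio_ae_eq_Iic (a := x) (μ := expMeasure r)), aux_expMeasure_Iic r hr x]

lemma aux_map_exp_neg :
    Measure.map (fun x : ℝ => Real.exp (-x)) (expMeasure 1)
      = volume.restrict (Set.Ioo (0:ℝ) 1) := by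
  haveI : IsProbabilityMeasure (expMeasure 1) := isProbabilityMeasure_expMeasure one_pos
  have hg : Measurable fun x : ℝ => Real.exp (-x) := by fun_prop
  haveI : IsFiniteMeasure (Measure.map (fun x : ℝ => Real.exp (-x)) (expMeasure 1)) := by
    haveI := Measure.isProbabilityMeasure_map (μ := expMeasure 1) hg.aemeasurable
    infer_instance
  refine Measure.ext_of_Iic _ _ fun y => ?_
  rw [Measure.map_apply hg measurableSet_Iic, Measure.restrict_apply measurableSet_Iic]
  rcases le_or_gt y 0 with hy | hy
  · have he : (fun x : ℝ => Real.exp (-x)) ⁻¹' Set.Iic y = ∅ := by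
      ext x
      simp only [Set.mem_preimage, Set.mem_Iic, Set.mem_empty_iff_false, iff_false, not_le]
      exact lt_of_le_of_lt hy (Real.exp_pos _)
    have he2 : Set.Iic y ∩ Set.Ioo (0:ℝ) 1 = ∅ := by
      ext x
      simp only [Set.mem_inter_iff, Set.mem_Iic, Set.mem_Ioo, Set.mem_empty_iff_false, iff_false,
        not_and]
      intro h1 h2; linarith
    rw [he, he2]
    simp
  · have hpre : (fun x : ℝ => Real.exp (-x)) ⁻¹' Set.Iic y = Set.Ici (-Real.log y) := by
      ext x
      simp only [Set.mem_preimage, Set.mem_Iic, Set.mem_Ici]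
      constructor
      · intro h
        have := (Real.le_log_iff_exp_le hy).mpr h
        linarith
      · intro h
        exact (Real.le_log_iff_exp_le hy).mp (by linarith)
    have hIci : expMeasure 1 (Set.Ici (-Real.log y))
        = 1 - ENNReal.ofReal (1 - Real.exp (-(1 * (-Real.log y)))) := by
      have h2 := measure_compl (μ := expMeasure 1) (measurableSet_Iio (a := -Real.log y))
        (measure_ne_top _ _)
      rw [Set.compl_Iio] at h2
      rw [h2, measure_univ, aux_expMeasure_Iio 1 one_pos]
    rw [hpre, hIci]
    rcases lt_or_ge y 1 with hy1 | hy1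
    · have hlog : Real.log y < 0 := Real.log_neg hy hy1
      have hexp : Real.exp (-(1 * (-Real.log y))) = y := by
        rw [one_mul, neg_neg, Real.exp_log hy]
      rw [hexp]
      have hset : Set.Iic y ∩ Set.Ioo (0:ℝ) 1 = Set.Ioc 0 y := by
        ext x
        simp only [Set.mem_inter_iff, Set.mem_Iic, Set.mem_Ioo, Set.mem_Ioc]
        constructor
        · rintro ⟨h1, h2, h3⟩; exact ⟨h2, h1⟩
        · rintro ⟨h1, h2⟩; exact ⟨h2, h1, by linarith⟩
      rw [hset, Real.volume_Ioc, sub_zero]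
      have h1 : (1 : ℝ≥0∞) = ENNReal.ofReal 1 := by simp
      rw [h1, ← ENNReal.ofReal_sub 1 (by linarith : (0:ℝ) ≤ 1 - y)]
      norm_num
    · have hlog : 0 ≤ Real.log y := Real.log_nonneg hy1
      have hle : 1 - Real.exp (-(1 * (-Real.log y))) ≤ 0 := by
        rw [one_mul, neg_neg]
        have := Real.one_le_exp hlog
        linarith
      rw [ENNReal.ofReal_eq_zero.mpr hle, tsub_zero]
      have hset : Set.Iic y ∩ Set.Ioo (0:ℝ) 1 = Set.Ioo 0 1 := by
        ext x
        simp only [Set.mem_inter_iff, Set.mem_Iic, Set.mem_Ioo]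
        constructor
        · rintro ⟨h1, h2⟩; exact h2
        · rintro ⟨h1, h2⟩; exact ⟨by linarith, h1, h2⟩
      rw [hset, Real.volume_Ioo]
      norm_num

lemma aux_multipliable {y : ℝ} (h0 : 0 < y) (h1 : y < 1) :
    Multipliable (fun j : ℕ => 1 - y ^ (j + 2)) := by
  have hpos : ∀ j : ℕ, 0 < 1 - y ^ (j + 2) := fun j =>
    sub_pos.2 (pow_lt_one₀ h0.le h1 (by omega))
  refine Real.multipliable_of_summable_log hpos ?_
  rw [← summable_neg_iff]
  have hy2 : 0 < 1 - y ^ 2 := sub_pos.2 (pow_lt_one₀ h0.le h1 two_ne_zero)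
  have hb0 : Summable (fun j : ℕ => y ^ j) := summable_geometric_of_lt_one h0.le h1
  have hb : Summable (fun j : ℕ => (1 - y ^ 2)⁻¹ * y ^ 2 * y ^ j) := hb0.mul_left _
  refine Summable.of_nonneg_of_le (fun j => ?_) (fun j => ?_) hb
  · simp only [neg_nonneg]
    refine Real.log_nonpos (hpos j).le ?_
    have := pow_pos h0 (j + 2)
    linarith
  · have ht : 0 < y ^ (j + 2) := pow_pos h0 _
    have hty : y ^ (j + 2) ≤ y ^ 2 := pow_le_pow_of_le_one h0.le h1.le (by omega)
    have hlog : -Real.log (1 - y ^ (j + 2)) ≤ (1 - y ^ (j + 2))⁻¹ - 1 := by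
      rw [← Real.log_inv]
      have := Real.log_le_sub_one_of_pos (inv_pos.2 (hpos j))
      linarith
    have heq : (1 - y ^ (j + 2))⁻¹ - 1 = y ^ (j + 2) / (1 - y ^ (j + 2)) := by
      have hne : (1 - y ^ (j + 2)) ≠ 0 := (hpos j).ne'
      field_simp
      ring
    have hle : y ^ (j + 2) / (1 - y ^ (j + 2)) ≤ y ^ (j + 2) / (1 - y ^ 2) :=
      div_le_div_of_nonneg_left ht.le hy2 (by linarith)
    have hrw : y ^ (j + 2) / (1 - y ^ 2) = (1 - y ^ 2)⁻¹ * y ^ 2 * y ^ j := by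
      rw [pow_add]; ring
    linarith

end Aux

/-- for independent exponentials `X i` of rate `i + 1` (Sukhatme
weights, zero-indexed) and `σn n` the permutation listing `X 0, …, X (n-1)` in
decreasing order, the probability that the smallest-rate ball is last, i.e.
`σn n 0 = 0`, converges to `∫₀¹ ∏_{j≥2} (1 - y^j) dy`. -/
theorem sukhatme_last_ball_limit
    {Ω : Type*} [MeasurableSpace Ω] (P : Measure Ω) [IsProbabilityMeasure P]
    (X : ℕ → Ω → ℝ) (hmeas : ∀ i, Measurable (X i))
    (hindep : iIndepFun X P)
    (hlaw : ∀ i : ℕ, Measure.map (X i) P = expMeasure (i + 1))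
    (σn : ℕ → Ω → (ℕ → ℕ))
    (hσ : ∀ n, ∀ᵐ ω ∂P,
      (∀ i, n ≤ i → σn n ω i = i) ∧
      Set.BijOn (σn n ω) (Set.Iio n) (Set.Iio n) ∧
      (∀ i j, i < j → j < n → X (σn n ω j) ω < X (σn n ω i) ω)) :
    Tendsto (fun n : ℕ => (P {ω | σn n ω 0 = 0}).toReal) atTop
      (nhds (∫ y in Set.Ioo (0 : ℝ) 1, ∏' j : ℕ, (1 - y ^ (j + 2)))) := by
  classical
  haveI : IsProbabilityMeasure (expMeasure 1) := isProbabilityMeasure_expMeasure one_pos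
  haveI : IsFiniteMeasure (volume.restrict (Set.Ioo (0:ℝ) 1)) :=
    ⟨by rw [Measure.restrict_apply_univ]; simp [Real.volume_Ioo]⟩
  have hlaw0 : Measure.map (X 0) P = expMeasure 1 := by simpa using hlaw 0
  -- Step A: finite n formula
  have key : ∀ n : ℕ, 1 ≤ n →
      (P {ω | σn n ω 0 = 0}).toReal
        = ∫ y in Set.Ioo (0:ℝ) 1, ∏ j ∈ Finset.range (n - 1), (1 - y ^ (j + 2)) := by
    intro n hn
    have h0n : (0 : ℕ) ∈ Set.Iio n := Set.mem_Iio.mpr hn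
    set T : Finset ℕ := Finset.Ico 1 n with hT
    set V : Ω → (T → ℝ) := fun ω i => X i ω with hV
    have hVmeas : Measurable V := measurable_pi_lambda _ fun i => hmeas i
    haveI : IsProbabilityMeasure (Measure.map V P) :=
      Measure.isProbabilityMeasure_map hVmeas.aemeasurable
    -- A1: rewrite the event
    have hset : P {ω | σn n ω 0 = 0} = P {ω | ∀ i : T, X i ω < X 0 ω} := by
      apply measure_congr
      rw [Filter.eventuallyEq_set]
      filter_upwards [hσ n] with ω hω
      obtain ⟨hfix, hbij, hsort⟩ := hω
      show (σn n ω 0 = 0) ↔ (∀ i : T, X i ω < X 0 ω)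
      constructor
      · intro h0 i
        obtain ⟨hi1, hi2⟩ := Finset.mem_Ico.mp i.2
        obtain ⟨k, hk, hki⟩ := hbij.2.2 (Set.mem_Iio.mpr hi2)
        have hk0 : k ≠ 0 := by
          intro h; rw [h, h0] at hki; omega
        have := hsort 0 k (Nat.pos_of_ne_zero hk0) (Set.mem_Iio.mp hk)
        rwa [hki, h0] at this
      · intro hmax
        by_contra hne
        have hσ0 : σn n ω 0 ∈ Set.Iio n := hbij.1 h0n
        have hσ0ne : σn n ω 0 ≠ 0 := hne
        have h1 : X (σn n ω 0) ω < X 0 ω := by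
          refine hmax ⟨σn n ω 0, Finset.mem_Ico.mpr ⟨Nat.pos_of_ne_zero hσ0ne, Set.mem_Iio.mp hσ0⟩⟩
        obtain ⟨k, hk, hk0⟩ := hbij.2.2 h0n
        have hkne : k ≠ 0 := by
          intro h; rw [h] at hk0; exact hne hk0
        have h2 := hsort 0 k (Nat.pos_of_ne_zero hkne) (Set.mem_Iio.mp hk)
        rw [hk0] at h2
        linarith
    -- independence of X 0 and the vector V
    have h01 : Disjoint ({0} : Finset ℕ) T := by
      rw [Finset.disjoint_left]
      intro a ha
      intro hb
      rw [Finset.mem_singleton] at ha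
      rw [hT, Finset.mem_Ico] at hb
      omega
    have hInd : IndepFun (X 0) V P := by
      have h := (hindep.indepFun_finset {0} T h01 hmeas).comp
        (φ := fun u : (∀ _ : ({0} : Finset ℕ), ℝ) => u ⟨0, Finset.mem_singleton_self 0⟩)
        (ψ := id) (measurable_pi_apply (X := fun _ : ({0} : Finset ℕ) => ℝ) _) measurable_id
      exact h
    set E : Set (ℝ × (T → ℝ)) := {p | ∀ i : T, p.2 i < p.1} with hE
    have hEmeas : MeasurableSet E := by
      have h1 : E = ⋂ i : T, {p : ℝ × (T → ℝ) | p.2 i < p.1} := by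
        ext p; simp [hE]
      rw [h1]
      exact MeasurableSet.iInter fun i =>
        measurableSet_lt (by fun_prop) (by fun_prop)
    have hpre : {ω | ∀ i : T, X i ω < X 0 ω} = (fun ω => (X 0 ω, V ω)) ⁻¹' E := rfl
    have hΦ : Measurable fun y : ℝ => ∏ i ∈ T, ENNReal.ofReal (1 - y ^ (i + 1)) := by
      apply Finset.measurable_prod
      intro i _
      exact ENNReal.measurable_ofReal.comp (by fun_prop)
    have hg : Measurable fun x : ℝ => Real.exp (-x) := by fun_prop
    have hsect : ∀ x : ℝ, (Measure.map V P) (Prod.mk x ⁻¹' E)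
        = ∏ i ∈ T, ENNReal.ofReal (1 - Real.exp (-(((i : ℝ) + 1) * x))) := by
      intro x
      have hs : MeasurableSet {v : T → ℝ | ∀ i, v i < x} := by
        have h1 : {v : T → ℝ | ∀ i, v i < x} = ⋂ i, {v : T → ℝ | v i < x} := by
          ext v; simp
        rw [h1]
        exact MeasurableSet.iInter fun i =>
          measurableSet_lt (measurable_pi_apply i) measurable_const
      have h1 : Prod.mk x ⁻¹' E = {v : T → ℝ | ∀ i, v i < x} := rfl
      rw [h1, Measure.map_apply hVmeas hs]
      have h2 : V ⁻¹' {v : T → ℝ | ∀ i, v i < x} = ⋂ i ∈ T, X i ⁻¹' Set.Iio x := by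
        ext ω
        simp only [Set.mem_preimage, Set.mem_setOf_eq, Set.mem_iInter, Set.mem_Iio,
          Subtype.forall, hV]
      rw [h2, hindep.measure_inter_preimage_eq_mul T (sets := fun _ => Set.Iio x)
        (fun i _ => measurableSet_Iio)]
      refine Finset.prod_congr rfl fun i _ => ?_
      rw [← Measure.map_apply (hmeas i) measurableSet_Iio, hlaw i,
        aux_expMeasure_Iio _ (by positivity) x]
    have hPA : P {ω | σn n ω 0 = 0}
        = ∫⁻ y in Set.Ioo (0:ℝ) 1,
            ENNReal.ofReal (∏ j ∈ Finset.range (n - 1), (1 - y ^ (j + 2))) := by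
      rw [hset, hpre]
      calc P ((fun ω => (X 0 ω, V ω)) ⁻¹' E)
          = ((Measure.map (X 0) P).prod (Measure.map V P)) E := by
            rw [← (indepFun_iff_map_prod_eq_prod_map_map (hmeas 0).aemeasurable
              hVmeas.aemeasurable).mp hInd,
              Measure.map_apply ((hmeas 0).prodMk hVmeas) hEmeas]
        _ = ∫⁻ x, (Measure.map V P) (Prod.mk x ⁻¹' E) ∂(expMeasure 1) := by
            rw [hlaw0, Measure.prod_apply hEmeas]
        _ = ∫⁻ x, (fun y : ℝ => ∏ i ∈ T, ENNReal.ofReal (1 - y ^ (i + 1)))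
              (Real.exp (-x)) ∂(expMeasure 1) := by
            refine lintegral_congr fun x => ?_
            rw [hsect x]
            refine Finset.prod_congr rfl fun i _ => ?_
            have h3 : -(((i : ℝ) + 1) * x) = ((i + 1 : ℕ) : ℝ) * (-x) := by
              push_cast; ring
            rw [h3, Real.exp_nat_mul]
        _ = ∫⁻ y, ∏ i ∈ T, ENNReal.ofReal (1 - y ^ (i + 1))
              ∂(Measure.map (fun x : ℝ => Real.exp (-x)) (expMeasure 1)) :=
            (lintegral_map hΦ hg).symm
        _ = ∫⁻ y in Set.Ioo (0:ℝ) 1, ∏ i ∈ T, ENNReal.ofReal (1 - y ^ (i + 1)) := by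
            rw [aux_map_exp_neg]
        _ = ∫⁻ y in Set.Ioo (0:ℝ) 1,
              ENNReal.ofReal (∏ j ∈ Finset.range (n - 1), (1 - y ^ (j + 2))) := by
            refine setLIntegral_congr_fun measurableSet_Ioo (fun y hy => ?_)
            rw [← ENNReal.ofReal_prod_of_nonneg (fun i _ => by
              have : y ^ (i + 1) ≤ 1 := pow_le_one₀ hy.1.le hy.2.le
              linarith)]
            congr 1
            rw [hT, Finset.prod_Ico_eq_prod_range]
            refine Finset.prod_congr rfl fun j _ => ?_
            congr 2
            omega
    rw [hPA, integral_eq_lintegral_of_nonneg_ae]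
    · filter_upwards [ae_restrict_mem measurableSet_Ioo] with y hy
      refine Finset.prod_nonneg fun j _ => ?_
      have : y ^ (j + 2) ≤ 1 := pow_le_one₀ hy.1.le hy.2.le
      linarith
    · refine Measurable.aestronglyMeasurable ?_
      apply Finset.measurable_prod
      intro j _
      fun_prop
  -- Step B: dominated convergence
  have hlim : Tendsto
      (fun m : ℕ => ∫ y in Set.Ioo (0:ℝ) 1, ∏ j ∈ Finset.range m, (1 - y ^ (j + 2)))
      atTop (nhds (∫ y in Set.Ioo (0 : ℝ) 1, ∏' j : ℕ, (1 - y ^ (j + 2)))) := by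
    refine tendsto_integral_of_dominated_convergence (fun _ => (1 : ℝ))
      (fun m => ?_) (integrable_const 1) (fun m => ?_) ?_
    · refine Measurable.aestronglyMeasurable ?_
      apply Finset.measurable_prod
      intro j _
      fun_prop
    · filter_upwards [ae_restrict_mem measurableSet_Ioo] with y hy
      have h0 : 0 ≤ ∏ j ∈ Finset.range m, (1 - y ^ (j + 2)) :=
        Finset.prod_nonneg fun j _ => by
          have : y ^ (j + 2) ≤ 1 := pow_le_one₀ hy.1.le hy.2.le
          linarith
      have h1 : ∏ j ∈ Finset.range m, (1 - y ^ (j + 2)) ≤ 1 := by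
        refine Finset.prod_le_one (fun j _ => ?_) (fun j _ => ?_)
        · have : y ^ (j + 2) ≤ 1 := pow_le_one₀ hy.1.le hy.2.le
          linarith
        · have : 0 ≤ y ^ (j + 2) := pow_nonneg hy.1.le _
          linarith
      rw [Real.norm_eq_abs, abs_of_nonneg h0]
      exact h1
    · filter_upwards [ae_restrict_mem measurableSet_Ioo] with y hy
      exact (aux_multipliable hy.1 hy.2).hasProd.tendsto_prod_nat
  have hcomp := hlim.comp (tendsto_sub_atTop_nat 1)
  refine Tendsto.congr' ?_ hcomp
  filter_upwards [eventually_ge_atTop 1] with n hn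
  exact (key n hn).symm
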